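/- Let q ∈ ℂ with |q| = 1 and q^{2k} ≠ 1 for 1 ≤ k ≤ ℓ. Then the projector ~P^{(ℓ)} = Σ_{n=0}^{ℓ} ~||ℓ,n⟩⟨ℓ,n|| on (ℂ²)^{⊗ℓ} is Hermitian: (~P^{(ℓ)})† = ~P^{(ℓ)}, with respect to the Hermitian inner product in which the basis vectors v_S are orthonormal. -/

import Mathlib

open Matrix Complex Finset Filter

noncomputable section

/-- q-integer `[n]_q = (q^n - q^{-n})/(q - q⁻¹)`. -/
def qint (q : ℂ) (n : ℕ) : ℂ := (q ^ n - q⁻¹ ^ n) / (q - q⁻¹)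

/-- q-factorial `[n]_q!`. -/
def qfact (q : ℂ) (n : ℕ) : ℂ := ∏ k ∈ Finset.range n, qint q (k + 1)

/-- q-binomial coefficient `[m ¦ n]_q`. -/
def qbinom (q : ℂ) (m n : ℕ) : ℂ := qfact q m / (qfact q (m - n) * qfact q n)

/-- The set of positions where the configuration `c` equals `1`. -/
def oneSet {m : ℕ} (c : Fin m → Fin 2) : Finset (Fin m) :=
  Finset.univ.filter fun i => c i = 1

/-- The exponent `Σ(S) − n m + n(n−1)/2` (positions counted `1,…,m`). -/
def expKet (m n : ℕ) (S : Finset (Fin m)) : ℤ :=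
  (∑ i ∈ S, ((i : ℤ) + 1)) - (n : ℤ) * (m : ℤ) + ((n * (n - 1) / 2 : ℕ) : ℤ)

/-- Coefficients of the ket `||m, n⟩` in the standard basis. -/
def ketCoef (q : ℂ) (m n : ℕ) (c : Fin m → Fin 2) : ℂ :=
  if (oneSet c).card = n then q ^ expKet m n (oneSet c) else 0

/-- Coefficients of the bra `⟨m, n||` in the standard (bilinear) dual basis. -/
def braCoef (q : ℂ) (m n : ℕ) (c : Fin m → Fin 2) : ℂ :=
  (qbinom q m n)⁻¹ * q ^ ((n : ℤ) * ((m : ℤ) - (n : ℤ))) * ketCoef q m n c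

/-- Coefficients of the tilde bra `~⟨m, n||`. -/
def tbraCoef (q : ℂ) (m n : ℕ) (c : Fin m → Fin 2) : ℂ :=
  ((m.choose n : ℂ))⁻¹ *
    (if (oneSet c).card = n then q ^ (-(expKet m n (oneSet c))) else 0)

/-- Coefficients of the tilde ket `~||m, n⟩`. -/
def tketCoef (q : ℂ) (m n : ℕ) (c : Fin m → Fin 2) : ℂ :=
  qbinom q m n * q ^ (-((n : ℤ) * ((m : ℤ) - (n : ℤ)))) * ((m.choose n : ℂ))⁻¹ *
    (if (oneSet c).card = n then q ^ (-(expKet m n (oneSet c))) else 0)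

/-- The projector `P^{(m)} = Σ_{n=0}^{m} ||m,n⟩⟨m,n||` on `(ℂ²)^{⊗m}`. -/
def PlocM (q : ℂ) (m : ℕ) : Matrix (Fin m → Fin 2) (Fin m → Fin 2) ℂ :=
  Matrix.of fun a b => ∑ n ∈ Finset.range (m + 1), ketCoef q m n a * braCoef q m n b

/-- The projector `~P^{(m)} = Σ_{n=0}^{m} ~||m,n⟩⟨m,n||` on `(ℂ²)^{⊗m}`. -/
def tPlocM (q : ℂ) (m : ℕ) : Matrix (Fin m → Fin 2) (Fin m → Fin 2) ℂ :=
  Matrix.of fun a b => ∑ n ∈ Finset.range (m + 1), tketCoef q m n a * braCoef q m n b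


/-- In the massless regime (`|q| = 1`), the projector `~P^{(m)}` is Hermitian. -/
theorem statement13 (q : ℂ) (habs : ‖q‖ = 1) (m : ℕ)
    (hq : ∀ k : ℕ, 1 ≤ k → k ≤ m → q ^ (2 * k) ≠ 1) :
    (tPlocM q m)ᴴ = tPlocM q m := by
  have hq0 : q ≠ 0 := by
    intro h; rw [h] at habs; simp at habs
  have h1 : q * (starRingEnd ℂ) q = 1 := by
    rw [Complex.mul_conj]
    rw [Complex.normSq_eq_norm_sq, habs]; norm_num
  have hc : (starRingEnd ℂ) q = q⁻¹ := (inv_eq_of_mul_eq_one_right h1).symm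
  have hci : (starRingEnd ℂ) q⁻¹ = q := by
    rw [map_inv₀, hc, inv_inv]
  have hzpow : ∀ z : ℤ, (starRingEnd ℂ) (q ^ z) = q ^ (-z) := by
    intro z
    rw [map_zpow₀, hc, _root_.inv_zpow, ← _root_.zpow_neg]
  have hqint : ∀ n : ℕ, (starRingEnd ℂ) (qint q n) = qint q n := by
    intro n
    simp only [qint, map_div₀, map_sub, map_pow, hc, hci]
    rw [← neg_sub (q ^ n), ← neg_sub q, neg_div_neg_eq]
  have hqfact : ∀ n : ℕ, (starRingEnd ℂ) (qfact q n) = qfact q n := by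
    intro n
    simp only [qfact, map_prod, hqint]
  have hqbinom : ∀ n : ℕ, (starRingEnd ℂ) (qbinom q m n) = qbinom q m n := by
    intro n
    simp only [qbinom, map_div₀, _root_.map_mul, hqfact]
  ext a b
  simp only [conjTranspose_apply, tPlocM, of_apply, star_def, map_sum]
  refine Finset.sum_congr rfl fun n _ => ?_
  simp only [tketCoef, braCoef, ketCoef, _root_.map_mul, map_inv₀, map_natCast, hqbinom, hzpow]
  split_ifs with h1 h2 h2 <;>
    simp only [map_zero, mul_zero, zero_mul, _root_.map_mul, map_inv₀, map_natCast, hqbinom, hzpow, neg_neg] <;> ring
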